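/- (Lemma 4 of the appendix) Assume N ≥ 3, let T be an N×N complex Hermitian matrix with T_{N−1,N−1} = 1, and let q ∈ ℂ and k, l ∈ ℝ satisfy the matrix equations J₊·T + k·(J₋·T) + l·(T·J₊) = (conj q)·T and T·J₋ + l·(J₋·T) + k·(T·J₊) = q·T. If k ≠ 0 and q = 0, then l = 0. -/

import Mathlib

open Matrix

/-- Ladder coefficients c_a = √((N−1−a)(a+1)), so that c_{N−1} = 0. -/
noncomputable def spinC (N a : ℕ) : ℝ :=
  Real.sqrt (((N : ℝ) - 1 - a) * (a + 1))

/-- Raising operator J₊: (J₊)_{a+1,a} = c_a, all other entries 0. -/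
noncomputable def Jp (N : ℕ) : Matrix (Fin N) (Fin N) ℂ :=
  Matrix.of fun a b => if (a : ℕ) = (b : ℕ) + 1 then ((spinC N b : ℝ) : ℂ) else 0

/-- Lowering operator J₋ = J₊ᵀ. -/
noncomputable def Jm (N : ℕ) : Matrix (Fin N) (Fin N) ℂ := (Jp N)ᵀ

/-- J_z = diag(a − (N−1)/2). -/
noncomputable def Jz (N : ℕ) : Matrix (Fin N) (Fin N) ℂ :=
  Matrix.diagonal fun a => ((a : ℂ) - ((N : ℂ) - 1) / 2)

/-- J_x = (J₊ + J₋)/2. -/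
noncomputable def Jx (N : ℕ) : Matrix (Fin N) (Fin N) ℂ :=
  (1 / 2 : ℂ) • (Jp N + Jm N)

/-- J_y = (J₊ − J₋)/(2i). -/
noncomputable def Jy (N : ℕ) : Matrix (Fin N) (Fin N) ℂ :=
  (1 / (2 * Complex.I)) • (Jp N - Jm N)

section Helpers

lemma spinC_pos {N a : ℕ} (h : a + 1 < N) : 0 < spinC N a := by
  apply Real.sqrt_pos.2
  have : (a : ℝ) + 1 < N := by exact_mod_cast Nat.cast_lt.2 h
  nlinarith [Nat.cast_nonneg (α := ℝ) a]

lemma spinC_sq {N a : ℕ} (h : a + 1 ≤ N) : spinC N a ^ 2 = ((N : ℝ) - 1 - a) * (a + 1) := by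
  apply Real.sq_sqrt
  have : (a : ℝ) + 1 ≤ N := by exact_mod_cast Nat.cast_le.2 h
  nlinarith [Nat.cast_nonneg (α := ℝ) a]

lemma Jp_mul_succ {N : ℕ} (T : Matrix (Fin N) (Fin N) ℂ) (a b c : Fin N)
    (h : (a : ℕ) = (c : ℕ) + 1) :
    (Jp N * T) a b = (spinC N c : ℂ) * T c b := by
  rw [Matrix.mul_apply, Finset.sum_eq_single c]
  · simp [Jp, h]
  · intro d _ hd
    rw [Jp, Matrix.of_apply, if_neg (fun hd' => hd (Fin.ext (by omega)))]
    simp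
  · simp

lemma Jp_mul_zero {N : ℕ} (T : Matrix (Fin N) (Fin N) ℂ) (a b : Fin N)
    (h : (a : ℕ) = 0) : (Jp N * T) a b = 0 := by
  rw [Matrix.mul_apply]
  apply Finset.sum_eq_zero
  intro d _
  rw [Jp, Matrix.of_apply, if_neg (by omega)]
  simp

lemma Jm_mul_succ {N : ℕ} (T : Matrix (Fin N) (Fin N) ℂ) (a b c : Fin N)
    (h : (c : ℕ) = (a : ℕ) + 1) :
    (Jm N * T) a b = (spinC N a : ℂ) * T c b := by
  rw [Matrix.mul_apply, Finset.sum_eq_single c]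
  · simp [Jm, Jp, h]
  · intro d _ hd
    rw [Jm, Matrix.transpose_apply, Jp, Matrix.of_apply,
      if_neg (fun hd' => hd (Fin.ext (by omega)))]
    simp
  · simp

lemma Jm_mul_top {N : ℕ} (T : Matrix (Fin N) (Fin N) ℂ) (a b : Fin N)
    (h : (a : ℕ) + 1 = N) : (Jm N * T) a b = 0 := by
  rw [Matrix.mul_apply]
  apply Finset.sum_eq_zero
  intro d _
  rw [Jm, Matrix.transpose_apply, Jp, Matrix.of_apply, if_neg (by omega)]
  simp

lemma mul_Jp_succ {N : ℕ} (T : Matrix (Fin N) (Fin N) ℂ) (a b c : Fin N)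
    (h : (c : ℕ) = (b : ℕ) + 1) :
    (T * Jp N) a b = (spinC N b : ℂ) * T a c := by
  rw [Matrix.mul_apply, Finset.sum_eq_single c]
  · rw [Jp, Matrix.of_apply, if_pos h]; ring
  · intro d _ hd
    rw [Jp, Matrix.of_apply, if_neg (fun hd' => hd (Fin.ext (by omega)))]
    simp
  · simp

lemma mul_Jp_top {N : ℕ} (T : Matrix (Fin N) (Fin N) ℂ) (a b : Fin N)
    (h : (b : ℕ) + 1 = N) : (T * Jp N) a b = 0 := by
  rw [Matrix.mul_apply]
  apply Finset.sum_eq_zero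
  intro d _
  rw [Jp, Matrix.of_apply, if_neg (by omega)]
  simp

end Helpers

/-- Lemma 4: if k ≠ 0 and q = 0 then l = 0. -/
theorem lemma4_q_zero_imp_l_zero (N : ℕ) (hN : 3 ≤ N)
    (T : Matrix (Fin N) (Fin N) ℂ) (hT : T.IsHermitian)
    (hT1 : T ⟨N - 1, by omega⟩ ⟨N - 1, by omega⟩ = 1)
    (q : ℂ) (k l : ℝ)
    (heq1 : Jp N * T + (k : ℂ) • (Jm N * T) + (l : ℂ) • (T * Jp N)
      = (starRingEnd ℂ q) • T)
    (heq2 : T * Jm N + (l : ℂ) • (Jm N * T) + (k : ℂ) • (T * Jp N) = q • T)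
    (hk : k ≠ 0) (hq : q = 0) :
    l = 0 := by
  subst hq
  simp only [map_zero, zero_smul] at heq1
  have E : ∀ a b : Fin N,
      (Jp N * T) a b + (k : ℂ) * (Jm N * T) a b + (l : ℂ) * (T * Jp N) a b = 0 := by
    intro a b
    have h := congrFun (congrFun heq1 a) b
    simpa [Matrix.add_apply, Matrix.smul_apply, smul_eq_mul] using h
  have h1 : N - 1 < N := by omega
  have h2 : N - 2 < N := by omega
  have h3 : N - 3 < N := by omega
  have hH : ∀ a b : Fin N, T a b = star (T b a) := fun a b => (hT.apply a b).symm
  set p := spinC N (N - 2) with hp_def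
  set r := spinC N (N - 3) with hr_def
  have hp : 0 < p := spinC_pos (by omega)
  have hr : 0 < r := spinC_pos (by omega)
  have hpC : (p : ℂ) ≠ 0 := by exact_mod_cast hp.ne'
  have hrC : (r : ℂ) ≠ 0 := by exact_mod_cast hr.ne'
  have hT1' : T ⟨N - 1, h1⟩ ⟨N - 1, h1⟩ = 1 := hT1
  -- (i): T ⟨N-2⟩ ⟨N-1⟩ = 0
  have e1 := E ⟨N - 1, h1⟩ ⟨N - 1, h1⟩
  rw [Jp_mul_succ T _ _ ⟨N - 2, h2⟩ (by simp; omega),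
      Jm_mul_top T _ _ (by simp; omega),
      mul_Jp_top T _ _ (by simp; omega)] at e1
  simp only [Fin.val_mk, mul_zero, add_zero] at e1
  have hT10 : T ⟨N - 2, h2⟩ ⟨N - 1, h1⟩ = 0 := by
    rcases mul_eq_zero.1 e1 with h | h
    · exact absurd h hpC
    · exact h
  -- (ii): T ⟨N-2⟩ ⟨N-2⟩ = -l
  have e2 := E ⟨N - 1, h1⟩ ⟨N - 2, h2⟩
  rw [Jp_mul_succ T _ _ ⟨N - 2, h2⟩ (by simp; omega),
      Jm_mul_top T _ _ (by simp; omega),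
      mul_Jp_succ T _ _ ⟨N - 1, h1⟩ (by simp; omega)] at e2
  simp only [Fin.val_mk, hT1', mul_one] at e2
  have hT11 : T ⟨N - 2, h2⟩ ⟨N - 2, h2⟩ = -(l : ℂ) := by
    have : (p : ℂ) * (T ⟨N - 2, h2⟩ ⟨N - 2, h2⟩ + (l : ℂ)) = 0 := by
      linear_combination e2
    rcases mul_eq_zero.1 this with h | h
    · exact absurd h hpC
    · linear_combination h
  -- (iii): r * T ⟨N-3⟩ ⟨N-1⟩ = -(k*p)
  have e3 := E ⟨N - 2, h2⟩ ⟨N - 1, h1⟩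
  rw [Jp_mul_succ T _ _ ⟨N - 3, h3⟩ (by simp; omega),
      Jm_mul_succ T _ _ ⟨N - 1, h1⟩ (by simp; omega),
      mul_Jp_top T _ _ (by simp; omega)] at e3
  simp only [Fin.val_mk, hT1', mul_one, mul_zero, add_zero] at e3
  -- e3 : r * T ⟨N-3⟩ ⟨N-1⟩ + k * p = 0
  set x := T ⟨N - 3, h3⟩ ⟨N - 1, h1⟩ with hx_def
  have eA : (r : ℂ) * x = -((k : ℂ) * p) := by linear_combination e3
  -- x is real
  have hx_real : star x = x := by
    have : x = ((-(k * p) / r : ℝ) : ℂ) := by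
      push_cast
      field_simp
      linear_combination eA
    rw [this, Complex.star_def, Complex.conj_ofReal]
  -- square values
  have hp2 : p ^ 2 = (N : ℝ) - 1 := by
    rw [hp_def, spinC_sq (by omega)]
    have : ((N - 2 : ℕ) : ℝ) = (N : ℝ) - 2 := by
      push_cast [Nat.cast_sub (by omega : 2 ≤ N)]; ring
    rw [this]; ring
  have hr2 : r ^ 2 = 2 * ((N : ℝ) - 2) := by
    rw [hr_def, spinC_sq (by omega)]
    have : ((N - 3 : ℕ) : ℝ) = (N : ℝ) - 3 := by
      push_cast [Nat.cast_sub (by omega : 3 ≤ N)]; ring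
    rw [this]; ring
  rcases Nat.lt_or_ge N 4 with hN4 | hN4
  · -- N = 3 case
    have e4 := E ⟨N - 3, h3⟩ ⟨N - 2, h2⟩
    rw [Jp_mul_zero T _ _ (by simp; omega),
        Jm_mul_succ T _ _ ⟨N - 2, h2⟩ (by simp; omega),
        mul_Jp_succ T _ _ ⟨N - 1, h1⟩ (by simp; omega)] at e4
    simp only [Fin.val_mk, hT11, zero_add] at e4
    -- e4 : k * (r * -l) + l * (p * x) = 0
    have key : (k : ℂ) * l * (r ^ 2 + p ^ 2) = 0 := by
      linear_combination (-(r : ℂ)) * e4 + (l : ℂ) * (p : ℂ) * eA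
    have keyR : k * l * (r ^ 2 + p ^ 2) = 0 := by exact_mod_cast key
    have hpos : 0 < r ^ 2 + p ^ 2 := by positivity
    have hkl : k * l = 0 := by
      rcases mul_eq_zero.1 keyR with h | h
      · exact h
      · exact absurd h hpos.ne'
    rcases mul_eq_zero.1 hkl with h | h
    · exact absurd h hk
    · exact h
  · -- N ≥ 4 case
    have h4 : N - 4 < N := by omega
    set s := spinC N (N - 4) with hs_def
    have hs2 : s ^ 2 = 3 * ((N : ℝ) - 3) := by
      rw [hs_def, spinC_sq (by omega)]
      have : ((N - 4 : ℕ) : ℝ) = (N : ℝ) - 4 := by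
        push_cast [Nat.cast_sub (by omega : 4 ≤ N)]; ring
      rw [this]; ring
    -- (iv): s * T ⟨N-4⟩ ⟨N-2⟩ + k*r*(-l) + l*p*x = 0
    have e4 := E ⟨N - 3, h3⟩ ⟨N - 2, h2⟩
    rw [Jp_mul_succ T _ _ ⟨N - 4, h4⟩ (by simp; omega),
        Jm_mul_succ T _ _ ⟨N - 2, h2⟩ (by simp; omega),
        mul_Jp_succ T _ _ ⟨N - 1, h1⟩ (by simp; omega)] at e4
    simp only [Fin.val_mk, hT11] at e4
    set w := T ⟨N - 4, h4⟩ ⟨N - 2, h2⟩ with hw_def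
    -- e4 : s * w + k * (r * -l) + l * (p * x) = 0
    -- (v): p * T ⟨N-2⟩ ⟨N-4⟩ + l * s * T ⟨N-1⟩ ⟨N-3⟩ = 0
    have e5 := E ⟨N - 1, h1⟩ ⟨N - 4, h4⟩
    rw [Jp_mul_succ T _ _ ⟨N - 2, h2⟩ (by simp; omega),
        Jm_mul_top T _ _ (by simp; omega),
        mul_Jp_succ T _ _ ⟨N - 3, h3⟩ (by simp; omega)] at e5
    simp only [Fin.val_mk, mul_zero, add_zero] at e5
    set u := T ⟨N - 2, h2⟩ ⟨N - 4, h4⟩ with hu_def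
    -- T ⟨N-1⟩ ⟨N-3⟩ = star x = x
    have hTx : T ⟨N - 1, h1⟩ ⟨N - 3, h3⟩ = x := by
      rw [hH ⟨N - 1, h1⟩ ⟨N - 3, h3⟩]; exact hx_real
    rw [hTx] at e5
    -- e5 : p * u + l * (s * x) = 0
    have eC : (p : ℂ) * u = -((l : ℂ) * s * x) := by linear_combination e5
    -- u is real, so w = star u = u
    have hu_real : star u = u := by
      have : u = ((-(l * s * (-(k * p) / r)) / p : ℝ) : ℂ) := by
        push_cast
        field_simp
        apply mul_left_cancel₀ hpC
        linear_combination (r : ℂ) * eC - (l : ℂ) * (s : ℂ) * eA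
      rw [this, Complex.star_def, Complex.conj_ofReal]
    have hw : w = u := by
      rw [hw_def, hH ⟨N - 4, h4⟩ ⟨N - 2, h2⟩]; exact hu_real
    rw [hw] at e4
    -- now eliminate: from e4, eC, eA derive k*l*p*(r^2 + p^2 - s^2) = 0
    have key : (k : ℂ) * l * p * (r ^ 2 + p ^ 2 - s ^ 2) = 0 := by
      linear_combination (-(r : ℂ) * p) * e4 + ((r : ℂ) * s) * eC +
        ((l : ℂ) * (p ^ 2 - s ^ 2)) * eA
    have keyR : k * l * p * (r ^ 2 + p ^ 2 - s ^ 2) = 0 := by exact_mod_cast key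
    have hval : r ^ 2 + p ^ 2 - s ^ 2 = 4 := by rw [hr2, hp2, hs2]; ring
    rw [hval] at keyR
    have hkl : k * l = 0 := by
      have := mul_eq_zero.1 keyR
      rcases this with h | h
      · rcases mul_eq_zero.1 h with h' | h'
        · exact h'
        · exact absurd h' hp.ne'
      · norm_num at h
    rcases mul_eq_zero.1 hkl with h | h
    · exact absurd h hk
    · exact h
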